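/- Let R be a commutative local ring. Then every A ∈ M₂(R) with tr(A) ∈ U(R) is strongly rad-clean if and only if for all λ ∈ J(R) and μ ∈ U(R) the quadratic equation x² + μx + λ = 0 has a solution in R. -/
import Mathlib

/-- `j` lies in the Jacobson radical of the corner ring `eSe` (with identity `e`):
every element of the form `e - (eye)·j` is invertible in the corner ring. -/
def MemCornerJacobson {S : Type*} [Ring S] (e j : S) : Prop :=
  ∀ y : S, ∃ s : S,
    e * s * e = s ∧ s * (e - e * y * e * j) = e ∧ (e - e * y * e * j) * s = e

/-- `a` is strongly rad-clean: `a = e + u` with `e` idempotent, `u` a unit,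
`ae = ea` and `eae ∈ J(eSe)`. -/
def IsStronglyRadClean {S : Type*} [Ring S] (a : S) : Prop :=
  ∃ e : S, IsIdempotentElem e ∧ IsUnit (a - e) ∧ a * e = e * a ∧
    MemCornerJacobson e (e * a * e)

section Helpers

variable {R : Type*} [CommRing R]

/-- Cayley–Hamilton for 2×2 matrices. -/
lemma cayley2 (M : Matrix (Fin 2) (Fin 2) R) :
    M * M = M.trace • M - M.det • 1 := by
  ext i j
  fin_cases i <;> fin_cases j <;>
    simp [Matrix.mul_apply, Fin.sum_univ_two, Matrix.trace_fin_two,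
      Matrix.det_fin_two, Matrix.one_apply] <;> ring

lemma detcomb (M : Matrix (Fin 2) (Fin 2) R) (a b : R) :
    (a • M + b • (1 : Matrix (Fin 2) (Fin 2) R)).det
      = a ^ 2 * M.det + a * b * M.trace + b ^ 2 := by
  simp [Matrix.det_fin_two, Matrix.trace_fin_two, Matrix.one_apply]
  ring

lemma expand2 (A : Matrix (Fin 2) (Fin 2) R) (x y : R) :
    (A - x • 1) * (A - y • 1)
      = A * A - (x + y) • A + (x * y) • (1 : Matrix (Fin 2) (Fin 2) R) := by
  ext i j
  fin_cases i <;> fin_cases j <;>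
    simp [Matrix.mul_apply, Fin.sum_univ_two, Matrix.one_apply] <;> ring

lemma det_one_sub2 (M : Matrix (Fin 2) (Fin 2) R) :
    (1 - M).det = 1 - M.trace + M.det := by
  simp [Matrix.det_fin_two, Matrix.trace_fin_two, Matrix.one_apply]
  ring

lemma idem_scalar [IsLocalRing R] {d : R} (h : d * d = d) : d = 0 ∨ d = 1 := by
  rcases IsLocalRing.isUnit_or_isUnit_one_sub_self d with hu | hu
  · right
    obtain ⟨w, hw⟩ := hu.exists_right_inv
    have := congrArg (· * w) h
    simp only [mul_assoc, hw, mul_one] at this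
    exact this
  · left
    obtain ⟨w, hw⟩ := hu.exists_right_inv
    have h0 : d * (1 - d) = 0 := by linear_combination -h
    calc d = d * ((1 - d) * w) := by rw [hw, mul_one]
    _ = d * (1 - d) * w := by ring
    _ = 0 := by rw [h0, zero_mul]

lemma unit_sub_one [IsLocalRing R] {x : R} (hx : ¬ IsUnit x) : IsUnit (x - 1) := by
  have : IsUnit (1 - x) := (IsLocalRing.isUnit_or_isUnit_one_sub_self x).resolve_left hx
  simpa using this.neg

lemma nonunit_mul [IsLocalRing R] {x : R} (hx : ¬ IsUnit x) (c : R) :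
    ¬ IsUnit (x * c) := fun h => hx (isUnit_of_mul_isUnit_left h)

end Helpers

section Main

variable {R : Type*} [CommRing R] [IsLocalRing R]

lemma forward_dir
    (h : ∀ A : Matrix (Fin 2) (Fin 2) R, IsUnit A.trace → IsStronglyRadClean A) :
    ∀ lam ∈ Ideal.jacobson (⊥ : Ideal R), ∀ mu : R, IsUnit mu →
      ∃ x : R, x ^ 2 + mu * x + lam = 0 := by
  intro lam hlam mu hmu
  have hlamnu : ¬ IsUnit lam := by
    rw [IsLocalRing.jacobson_eq_maximalIdeal ⊥ bot_ne_top] at hlam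
    exact hlam
  set A : Matrix (Fin 2) (Fin 2) R := !![0, -lam; 1, -mu] with hAdef
  have htrA : A.trace = -mu := by simp [hAdef, Matrix.trace_fin_two]
  have hdetA : A.det = lam := by simp [hAdef, Matrix.det_fin_two]
  obtain ⟨E, hE, hu, hc, hcorner⟩ := h A (by rw [htrA]; exact hmu.neg)
  have hE0 : E ≠ 0 := by
    intro h0
    rw [h0, sub_zero, Matrix.isUnit_iff_isUnit_det, hdetA] at hu
    exact hlamnu hu
  have hE1 : E ≠ 1 := by
    intro h1
    obtain ⟨s, _, hs2, _⟩ := hcorner !![0, 1; 0, 0]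
    rw [h1] at hs2
    simp only [one_mul, mul_one] at hs2
    have hdet : ((1 : Matrix (Fin 2) (Fin 2) R) - !![0, 1; 0, 0] * A).det = 0 := by
      rw [hAdef]
      norm_num [Matrix.det_fin_two, Matrix.one_apply, Matrix.mul_apply, Fin.sum_univ_two,
        Matrix.sub_apply]
    have := congrArg Matrix.det hs2
    rw [Matrix.det_mul, hdet, mul_zero, Matrix.det_one] at this
    exact zero_ne_one this
  have hEE : E * E = E := hE
  have hdetE : E.det = 0 := by
    rcases idem_scalar (d := E.det) (by rw [← Matrix.det_mul, hEE]) with h0 | h1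
    · exact h0
    · exfalso
      have hEu : IsUnit E := (Matrix.isUnit_iff_isUnit_det E).mpr (h1 ▸ isUnit_one)
      exact hE1 (hEu.mul_left_cancel (by rw [hEE, mul_one]))
  have hdetE' : (1 - E).det = 0 := by
    have hidem : (1 - E) * (1 - E) = 1 - E := by
      have := hE.one_sub
      exact this
    rcases idem_scalar (d := (1 - E).det) (by rw [← Matrix.det_mul, hidem]) with h0 | h1
    · exact h0
    · exfalso
      have hEu : IsUnit (1 - E) := (Matrix.isUnit_iff_isUnit_det _).mpr (h1 ▸ isUnit_one)
      have : (1 : Matrix (Fin 2) (Fin 2) R) - E = 1 :=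
        hEu.mul_left_cancel (by rw [hidem, mul_one])
      exact hE0 (by linear_combination (norm := module) -this)
  have htrE : E.trace = 1 := by
    have := det_one_sub2 E
    rw [hdetE', hdetE] at this
    linear_combination this
  -- main computation
  set B := A * E with hBdef
  have hBB : B * B = A * A * E := by
    calc B * B = A * (E * A) * E := by rw [hBdef, mul_assoc, mul_assoc, mul_assoc]
    _ = A * (A * E) * E := by rw [← hc]
    _ = A * A * (E * E) := by rw [mul_assoc, mul_assoc, mul_assoc]
    _ = A * A * E := by rw [hEE]
  have hdetB : B.det = 0 := by rw [hBdef, Matrix.det_mul, hdetE, mul_zero]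
  have key : B.trace • B = (-mu) • B - lam • E := by
    have h1 := cayley2 B
    rw [hdetB, zero_smul, sub_zero, hBB] at h1
    have h2 := cayley2 A
    rw [htrA, hdetA] at h2
    calc B.trace • B = A * A * E := h1.symm
    _ = ((-mu) • A - lam • 1) * E := by rw [h2]
    _ = (-mu) • B - lam • E := by
        rw [Matrix.sub_mul, Matrix.smul_mul, Matrix.smul_mul, one_mul, hBdef]
  refine ⟨B.trace, ?_⟩
  have := congrArg Matrix.trace key
  rw [Matrix.trace_smul, Matrix.trace_sub, Matrix.trace_smul, Matrix.trace_smul, htrE] at this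
  simp only [smul_eq_mul] at this
  linear_combination this

lemma backward_dir
    (h : ∀ lam ∈ Ideal.jacobson (⊥ : Ideal R), ∀ mu : R, IsUnit mu →
      ∃ x : R, x ^ 2 + mu * x + lam = 0) :
    ∀ A : Matrix (Fin 2) (Fin 2) R, IsUnit A.trace → IsStronglyRadClean A := by
  intro A htA
  by_cases hdA : IsUnit A.det
  · refine ⟨0, by simp [IsIdempotentElem], ?_, by simp, ?_⟩
    · rw [sub_zero]; exact (Matrix.isUnit_iff_isUnit_det A).mpr hdA
    · intro y; exact ⟨0, by simp, by simp, by simp⟩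
  · have hδm : A.det ∈ Ideal.jacobson (⊥ : Ideal R) := by
      rw [IsLocalRing.jacobson_eq_maximalIdeal ⊥ bot_ne_top]
      exact hdA
    obtain ⟨r, hr⟩ := h A.det hδm (-A.trace) htA.neg
    obtain ⟨x, y, hxy, hsum, hxnu, hyu⟩ :
        ∃ x y : R, x * y = A.det ∧ x + y = A.trace ∧ ¬ IsUnit x ∧ IsUnit y := by
      by_cases hru : IsUnit r
      · refine ⟨A.trace - r, r, by linear_combination -hr, by ring, fun hu' => hdA ?_, hru⟩
        rw [show A.det = (A.trace - r) * r by linear_combination hr]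
        exact hu'.mul hru
      · refine ⟨r, A.trace - r, by linear_combination -hr, by ring, hru, ?_⟩
        by_contra hy
        have := IsLocalRing.nonunits_add (show r ∈ nonunits R from hru)
          (show A.trace - r ∈ nonunits R from hy)
        rw [add_sub_cancel] at this
        exact this htA
    have hu_xy : IsUnit (x - y) := by
      by_contra hxyn
      have := IsLocalRing.nonunits_add (show x ∈ nonunits R from hxnu)
        (show -(x - y) ∈ nonunits R from fun hh => hxyn (by simpa using hh.neg))
      rw [show x + -(x - y) = y by ring] at this
      exact this hyu
    obtain ⟨w, hw⟩ := hu_xy.exists_right_inv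
    have hCH : (A - x • 1) * (A - y • 1) = 0 := by
      rw [expand2, hsum, hxy, cayley2 A]
      module
    have hCH' : (A - y • 1) * (A - x • 1) = 0 := by
      rw [expand2, show y + x = A.trace by rw [add_comm]; exact hsum,
        show y * x = A.det by rw [mul_comm]; exact hxy, cayley2 A]
      module
    set E : Matrix (Fin 2) (Fin 2) R := w • (A - y • 1) with hEdef
    have keysq : (A - y • 1) * (A - y • 1) = (x - y) • (A - y • 1) := by
      calc (A - y • 1) * (A - y • 1)
          = (A - y • 1) * ((A - x • 1) + (x - y) • 1) := by
            rw [show (A - x • 1) + (x - y) • (1 : Matrix (Fin 2) (Fin 2) R) = A - y • 1 by module]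
      _ = (A - y • 1) * (A - x • 1) + (x - y) • ((A - y • 1) * 1) := by
            rw [mul_add, mul_smul_comm]
      _ = (x - y) • (A - y • 1) := by rw [hCH', zero_add, mul_one]
    have hidem : IsIdempotentElem E := by
      show E * E = E
      rw [hEdef, smul_mul_smul_comm, keysq, smul_smul,
        show w * w * (x - y) = w by linear_combination w * hw]
    have hcomm : A * E = E * A := by
      rw [hEdef, mul_smul_comm, smul_mul_assoc]
      congr 1
      rw [mul_sub, sub_mul, mul_smul_comm, smul_mul_assoc, mul_one, one_mul]
    have hAE : A * E = x • E := by
      have h0 : (A - x • 1) * E = 0 := by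
        rw [hEdef, mul_smul_comm, hCH, smul_zero]
      have h1 : A * E - x • E = (A - x • 1) * E := by
        rw [sub_mul, smul_mul_assoc, one_mul]
      rw [← sub_eq_zero, h1, h0]
    have hunit : IsUnit (A - E) := by
      have hAe : A - E = (1 - w) • A + (w * y) • 1 := by rw [hEdef]; module
      rw [hAe, Matrix.isUnit_iff_isUnit_det, detcomb]
      have hval : (1 - w) ^ 2 * A.det + (1 - w) * (w * y) * A.trace + (w * y) ^ 2
          = (x - 1) * y := by
        rw [← hxy, ← hsum]
        linear_combination (-y) * hw
      rw [hval]
      exact (unit_sub_one hxnu).mul hyu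
    refine ⟨E, hidem, hunit, hcomm, ?_⟩
    intro Y
    set M := E * Y * E with hMdef
    have hME : M * E = M := by rw [hMdef, mul_assoc (E * Y), hidem.eq]
    have hEM : E * M = M := by
      rw [hMdef, ← mul_assoc, ← mul_assoc, hidem.eq]
    have hcornerUnit : IsUnit ((1 : Matrix (Fin 2) (Fin 2) R) - x • M) := by
      have : (1 : Matrix (Fin 2) (Fin 2) R) - x • M = (-x) • M + (1 : R) • 1 := by module
      rw [this, Matrix.isUnit_iff_isUnit_det, detcomb]
      by_contra hnu
      have hsum1 : (1 : R) = ((-x) ^ 2 * M.det + -x * 1 * M.trace + 1 ^ 2)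
          + x * (M.trace - x * M.det) := by ring
      have := IsLocalRing.nonunits_add (show _ ∈ nonunits R from hnu)
        (show x * (M.trace - x * M.det) ∈ nonunits R from nonunit_mul hxnu _)
      rw [← hsum1] at this
      exact this isUnit_one
    obtain ⟨u, hu⟩ := hcornerUnit
    set V : Matrix (Fin 2) (Fin 2) R := (↑u⁻¹ : Matrix (Fin 2) (Fin 2) R) with hVdef
    have hV1 : ((1 : Matrix (Fin 2) (Fin 2) R) - x • M) * V = 1 := by
      rw [← hu, hVdef]; exact u.mul_inv
    have hV2 : V * ((1 : Matrix (Fin 2) (Fin 2) R) - x • M) = 1 := by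
      rw [← hu, hVdef]; exact u.inv_mul
    have hcommE : E * (1 - x • M) = (1 - x • M) * E := by
      rw [mul_sub, sub_mul, mul_one, one_mul, mul_smul_comm x E M, smul_mul_assoc x M E,
        hEM, hME]
    have hVE : E * V = V * E := by
      calc E * V = (V * (1 - x • M)) * (E * V) := by rw [hV2, one_mul]
      _ = V * (((1 - x • M) * E) * V) := by rw [mul_assoc, mul_assoc]
      _ = V * ((E * (1 - x • M)) * V) := by rw [← hcommE]
      _ = V * (E * ((1 - x • M) * V)) := by rw [mul_assoc]
      _ = V * E := by rw [hV1, mul_one]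
    have hEAE : E * A * E = x • E := by
      rw [← hcomm, hAE, smul_mul_assoc, hidem.eq]
    have htarget : E - E * Y * E * (E * A * E) = E * (1 - x • M) := by
      rw [hEAE, mul_smul_comm x M E, hME, mul_sub, mul_one, mul_smul_comm x E M, hEM]
    refine ⟨V * E, ?_, ?_, ?_⟩
    · rw [← mul_assoc, hVE]
      simp only [mul_assoc]
      rw [hidem.eq, hidem.eq]
    · rw [htarget, mul_assoc, ← mul_assoc E E, hidem.eq, hcommE, ← mul_assoc, hV2, one_mul]
    · rw [htarget, hcommE, mul_assoc, ← mul_assoc E V E, hVE, mul_assoc V E E, hidem.eq,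
        ← mul_assoc, hV1, one_mul]

end Main

theorem stmt12 {R : Type*} [CommRing R] [IsLocalRing R] :
    (∀ A : Matrix (Fin 2) (Fin 2) R, IsUnit A.trace → IsStronglyRadClean A) ↔
    (∀ lam ∈ Ideal.jacobson (⊥ : Ideal R), ∀ mu : R, IsUnit mu →
      ∃ x : R, x ^ 2 + mu * x + lam = 0) := by
  exact ⟨forward_dir, backward_dir⟩
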